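/- Stability of the explicit Fourier–Klibanov scheme: let Vⱼⁱ ∈ ℝ^N satisfy Vⱼⁱ = V₀^{i-j} + Δt · S⁻¹ ∑_{𝔦=0}^{j-1} F(V_𝔦^{𝔦+i-j}) for i ≥ j ≥ 1, where F(V)ₘ = (KV)ₘ + VᵀGₘV with |K|_F + ∑ₘ|Gₘ|_F ≤ P for all steps, and |V₀ⁱ|₂ ≤ C, |Vⱼ⁰|₂ ≤ C. If Δt|S⁻¹|_F · (total sum of the P's) ≤ ln((C+1)/(C+1/2)), then |Vⱼⁱ|₂ ≤ 2C for all i ≥ j ≥ 0. -/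

import Mathlib

open Matrix

noncomputable def vecNorm2 {N : ℕ} (X : Fin N → ℝ) : ℝ :=
  Real.sqrt (∑ n, X n ^ 2)

noncomputable def frobNorm {N : ℕ} (G : Matrix (Fin N) (Fin N) ℝ) : ℝ :=
  Real.sqrt (∑ m, ∑ n, G m n ^ 2)

lemma vecNorm2_nonneg {N : ℕ} (X : Fin N → ℝ) : 0 ≤ vecNorm2 X := Real.sqrt_nonneg _

lemma frobNorm_nonneg {N : ℕ} (G : Matrix (Fin N) (Fin N) ℝ) : 0 ≤ frobNorm G :=
  Real.sqrt_nonneg _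

lemma vecNorm2_eq_norm {N : ℕ} (X : Fin N → ℝ) :
    vecNorm2 X = ‖(WithLp.equiv 2 (Fin N → ℝ)).symm X‖ := by
  rw [show ‖(WithLp.equiv 2 (Fin N → ℝ)).symm X‖ = ‖((WithLp.equiv 2 (Fin N → ℝ)).symm X
      : EuclideanSpace ℝ (Fin N))‖ from rfl, EuclideanSpace.norm_eq]
  simp [vecNorm2, Real.norm_eq_abs, sq_abs]

lemma vecNorm2_add_le {N : ℕ} (X Y : Fin N → ℝ) :
    vecNorm2 (X + Y) ≤ vecNorm2 X + vecNorm2 Y := by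
  simp only [vecNorm2_eq_norm]
  exact norm_add_le ((WithLp.equiv 2 (Fin N → ℝ)).symm X) ((WithLp.equiv 2 (Fin N → ℝ)).symm Y)

lemma vecNorm2_smul {N : ℕ} (c : ℝ) (X : Fin N → ℝ) :
    vecNorm2 (c • X) = |c| * vecNorm2 X := by
  simp only [vecNorm2_eq_norm]
  exact norm_smul c ((WithLp.equiv 2 (Fin N → ℝ)).symm X)

lemma vecNorm2_sum_le {N : ℕ} {ι : Type*} (s : Finset ι) (f : ι → Fin N → ℝ) :
    vecNorm2 (∑ k ∈ s, f k) ≤ ∑ k ∈ s, vecNorm2 (f k) := by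
  simp only [vecNorm2_eq_norm]
  rw [WithLp.equiv_symm_apply, WithLp.toLp_sum]
  exact norm_sum_le s fun k => WithLp.toLp 2 (f k)

lemma vecNorm2_mulVec_le {N : ℕ} (A : Matrix (Fin N) (Fin N) ℝ) (X : Fin N → ℝ) :
    vecNorm2 (A.mulVec X) ≤ frobNorm A * vecNorm2 X := by
  rw [vecNorm2, vecNorm2, frobNorm, ← Real.sqrt_mul (by positivity)]
  apply Real.sqrt_le_sqrt
  rw [Finset.sum_mul]
  apply Finset.sum_le_sum
  intro m _
  have := Finset.sum_mul_sq_le_sq_mul_sq Finset.univ (fun n => A m n) X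
  simpa [Matrix.mulVec, dotProduct] using this

lemma abs_dotProduct_le {N : ℕ} (X Y : Fin N → ℝ) :
    |X ⬝ᵥ Y| ≤ vecNorm2 X * vecNorm2 Y := by
  rw [vecNorm2, vecNorm2, ← Real.sqrt_mul (by positivity)]
  apply Real.abs_le_sqrt
  simpa [dotProduct] using Finset.sum_mul_sq_le_sq_mul_sq Finset.univ X Y

lemma vecNorm2_le_sum_abs {N : ℕ} (X : Fin N → ℝ) : vecNorm2 X ≤ ∑ m, |X m| := by
  have h : ∑ n, X n ^ 2 ≤ (∑ m, |X m|) ^ 2 := by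
    calc ∑ n, X n ^ 2 = ∑ n, |X n| ^ 2 := by simp [sq_abs]
    _ ≤ (∑ m, |X m|) ^ 2 := Finset.sum_sq_le_sq_sum_of_nonneg fun i _ => abs_nonneg _
  calc vecNorm2 X ≤ Real.sqrt ((∑ m, |X m|) ^ 2) := Real.sqrt_le_sqrt h
  _ = ∑ m, |X m| := Real.sqrt_sq (by positivity)

/-- monotonicity of `t ↦ t/(1+t)` on nonnegatives. -/
lemma frac_mono {a b : ℝ} (ha : 0 ≤ a) (hab : a ≤ b) : a / (1 + a) ≤ b / (1 + b) := by
  rw [div_le_div_iff₀ (by linarith) (by linarith)]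
  nlinarith

/-- key one-step Bihari estimate. -/
lemma frac_step {u q : ℝ} (hu : 0 ≤ u) (hq : 0 ≤ q) :
    (u * (1 + q * (1 + u))) / (1 + u * (1 + q * (1 + u))) ≤ u / (1 + u) * (1 + q) := by
  have h1 : (0:ℝ) < 1 + u := by linarith
  have h2 : (0:ℝ) < 1 + u * (1 + q * (1 + u)) := by
    nlinarith [mul_nonneg hq (mul_nonneg hu hu), mul_nonneg hq hu]
  rw [div_mul_eq_mul_div, div_le_div_iff₀ h2 h1]
  nlinarith [mul_nonneg (mul_nonneg hq hq) (mul_nonneg hu (le_of_lt h1))]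

/-- Discrete Gronwall–Bellman–Ou-Iang lemma. -/
lemma gronwall_ou_iang (C : ℝ) (hC : 0 < C) (x q : ℕ → ℝ)
    (hx : ∀ k, 0 ≤ x k) (hq : ∀ k, 0 ≤ q k)
    (hX : ∀ k, x k ≤ C + ∑ i ∈ Finset.range k, q i * (x i + x i ^ 2))
    (hQ : ∀ k, ∑ i ∈ Finset.range k, q i ≤ Real.log ((C + 1) / (C + 1 / 2))) :
    ∀ k, x k ≤ 2 * C := by
  set u : ℕ → ℝ := fun k => C + ∑ i ∈ Finset.range k, q i * (x i + x i ^ 2) with hu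
  have huC : ∀ k, C ≤ u k := by
    intro k
    have : 0 ≤ ∑ i ∈ Finset.range k, q i * (x i + x i ^ 2) :=
      Finset.sum_nonneg fun i _ => mul_nonneg (hq i) (by nlinarith [hx i, sq_nonneg (x i)])
    simp only [hu]; linarith
  have hupos : ∀ k, 0 < 1 + u k := fun k => by have := huC k; linarith
  -- invariant
  have inv : ∀ k, u k / (1 + u k) ≤ C / (C + 1) * Real.exp (∑ i ∈ Finset.range k, q i) := by
    intro k
    induction k with
    | zero =>
      have hu0 : u 0 = C := by simp [hu]
      rw [hu0]
      simp [add_comm (1:ℝ) C]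
    | succ k ih =>
      have hxu : x k ≤ u k := hX k
      have hs : u (k + 1) = u k + q k * (x k + x k ^ 2) := by
        simp [hu, Finset.sum_range_succ]; ring
      have hw : u (k + 1) ≤ u k * (1 + q k * (1 + u k)) := by
        have h1 : x k + x k ^ 2 ≤ u k + u k ^ 2 := by nlinarith [hx k]
        have h2 : q k * (x k + x k ^ 2) ≤ q k * (u k + u k ^ 2) :=
          mul_le_mul_of_nonneg_left h1 (hq k)
        rw [hs]; nlinarith
      have hu0 : 0 ≤ u k := le_trans (le_of_lt hC) (huC k)
      have hu1 : 0 ≤ u (k + 1) := le_trans (le_of_lt hC) (huC (k + 1))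
      calc u (k + 1) / (1 + u (k + 1))
          ≤ (u k * (1 + q k * (1 + u k))) / (1 + u k * (1 + q k * (1 + u k))) :=
            frac_mono hu1 hw
        _ ≤ u k / (1 + u k) * (1 + q k) := frac_step hu0 (hq k)
        _ ≤ (C / (C + 1) * Real.exp (∑ i ∈ Finset.range k, q i)) * (1 + q k) := by
            apply mul_le_mul_of_nonneg_right ih (by linarith [hq k])
        _ ≤ (C / (C + 1) * Real.exp (∑ i ∈ Finset.range k, q i)) * Real.exp (q k) := by
            apply mul_le_mul_of_nonneg_left _ (by positivity)
            linarith [Real.add_one_le_exp (q k)]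
        _ = C / (C + 1) * Real.exp (∑ i ∈ Finset.range (k + 1), q i) := by
            rw [Finset.sum_range_succ, Real.exp_add]; ring
  intro k
  have hlog : Real.exp (∑ i ∈ Finset.range k, q i) ≤ (C + 1) / (C + 1 / 2) := by
    calc Real.exp (∑ i ∈ Finset.range k, q i)
        ≤ Real.exp (Real.log ((C + 1) / (C + 1 / 2))) := Real.exp_le_exp.mpr (hQ k)
      _ = (C + 1) / (C + 1 / 2) := Real.exp_log (by positivity)
  have h1 : u k / (1 + u k) ≤ C / (C + 1) * ((C + 1) / (C + 1 / 2)) := by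
    calc u k / (1 + u k) ≤ C / (C + 1) * Real.exp (∑ i ∈ Finset.range k, q i) := inv k
    _ ≤ C / (C + 1) * ((C + 1) / (C + 1 / 2)) :=
        mul_le_mul_of_nonneg_left hlog (by positivity)
  have h2 : C / (C + 1) * ((C + 1) / (C + 1 / 2)) = C / (C + 1 / 2) := by
    field_simp
  rw [h2, div_le_div_iff₀ (hupos k) (by linarith)] at h1
  have hfin : ∀ w : ℝ, w * (C + 1 / 2) ≤ C * (1 + w) → x k ≤ w → x k ≤ 2 * C := by
    intro w hw1 hw2; nlinarith
  exact hfin (u k) h1 (hX k)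

theorem fourier_klibanov_scheme_stability
    (N : ℕ) (hN : 1 ≤ N)
    (S Sinv : Matrix (Fin N) (Fin N) ℝ)
    (hS : S * Sinv = 1) (hS' : Sinv * S = 1)
    (Δt : ℝ) (hΔt : 0 < Δt)
    (K : ℕ → ℕ → Matrix (Fin N) (Fin N) ℝ)
    (G : ℕ → ℕ → Fin N → Matrix (Fin N) (Fin N) ℝ)
    (F : ℕ → ℕ → (Fin N → ℝ) → (Fin N → ℝ))
    (hF : ∀ i j V m, F i j V m = (K i j).mulVec V m + V ⬝ᵥ (G i j m).mulVec V)
    (P : ℕ → ℕ → ℝ) (hPnn : ∀ i j, 0 ≤ P i j)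
    (hP : ∀ i j, frobNorm (K i j) + ∑ m, frobNorm (G i j m) ≤ P i j)
    (C : ℝ) (hC : 0 < C)
    (V : ℕ → ℕ → Fin N → ℝ)
    (hdata0 : ∀ i, vecNorm2 (V i 0) ≤ C)
    (hdata1 : ∀ j, vecNorm2 (V 0 j) ≤ C)
    (hrec : ∀ i j, 1 ≤ j → j ≤ i →
      V i j = V (i - j) 0 +
        Δt • Sinv.mulVec (∑ k ∈ Finset.range j, F (k + (i - j)) k (V (k + (i - j)) k)))
    (hsmall : ∀ i j,
      Δt * frobNorm Sinv * ∑ a ∈ Finset.range (i + 1), ∑ b ∈ Finset.range (j + 1), P a b ≤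
        Real.log ((C + 1) / (C + 1 / 2))) :
    ∀ i j, j ≤ i → vecNorm2 (V i j) ≤ 2 * C := by
  -- bound on the nonlinearity
  have hFbound : ∀ i j (W : Fin N → ℝ),
      vecNorm2 (F i j W) ≤ P i j * (vecNorm2 W + vecNorm2 W ^ 2) := by
    intro i j W
    set x := vecNorm2 W with hx
    have hx0 : 0 ≤ x := vecNorm2_nonneg W
    have hsplit : F i j W = (K i j).mulVec W + fun m => W ⬝ᵥ (G i j m).mulVec W := by
      funext m; simpa using hF i j W m
    have h1 : vecNorm2 (F i j W) ≤ vecNorm2 ((K i j).mulVec W) +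
        vecNorm2 (fun m => W ⬝ᵥ (G i j m).mulVec W) := by
      rw [hsplit]; exact vecNorm2_add_le _ _
    have h2 : vecNorm2 ((K i j).mulVec W) ≤ frobNorm (K i j) * x :=
      vecNorm2_mulVec_le _ _
    have h3 : vecNorm2 (fun m => W ⬝ᵥ (G i j m).mulVec W) ≤
        (∑ m, frobNorm (G i j m)) * x ^ 2 := by
      calc vecNorm2 (fun m => W ⬝ᵥ (G i j m).mulVec W)
          ≤ ∑ m, |W ⬝ᵥ (G i j m).mulVec W| := vecNorm2_le_sum_abs _
        _ ≤ ∑ m, frobNorm (G i j m) * x ^ 2 := by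
            apply Finset.sum_le_sum
            intro m _
            calc |W ⬝ᵥ (G i j m).mulVec W| ≤ x * vecNorm2 ((G i j m).mulVec W) :=
                  abs_dotProduct_le _ _
              _ ≤ x * (frobNorm (G i j m) * x) :=
                  mul_le_mul_of_nonneg_left (vecNorm2_mulVec_le _ _) hx0
              _ = frobNorm (G i j m) * x ^ 2 := by ring
        _ = (∑ m, frobNorm (G i j m)) * x ^ 2 := by rw [Finset.sum_mul]
    have hK : frobNorm (K i j) ≤ P i j := by
      have := hP i j
      have : 0 ≤ ∑ m, frobNorm (G i j m) :=
        Finset.sum_nonneg fun m _ => frobNorm_nonneg _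
      linarith [hP i j]
    have hG : ∑ m, frobNorm (G i j m) ≤ P i j := by
      linarith [hP i j, frobNorm_nonneg (K i j)]
    have := mul_le_mul_of_nonneg_right hK hx0
    have := mul_le_mul_of_nonneg_right hG (sq_nonneg x)
    nlinarith
  intro i j hji
  set d := i - j with hd
  -- along the characteristic
  set x : ℕ → ℝ := fun k => vecNorm2 (V (k + d) k) with hxdef
  set q : ℕ → ℝ := fun k => Δt * frobNorm Sinv * P (k + d) k with hqdef
  have hDS : 0 ≤ Δt * frobNorm Sinv := mul_nonneg (le_of_lt hΔt) (frobNorm_nonneg _)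
  have hxnn : ∀ k, 0 ≤ x k := fun k => vecNorm2_nonneg _
  have hqnn : ∀ k, 0 ≤ q k := fun k => mul_nonneg hDS (hPnn _ _)
  have hX : ∀ k, x k ≤ C + ∑ l ∈ Finset.range k, q l * (x l + x l ^ 2) := by
    intro k
    have hsumnn : 0 ≤ ∑ l ∈ Finset.range k, q l * (x l + x l ^ 2) :=
      Finset.sum_nonneg fun l _ =>
        mul_nonneg (hqnn l) (by nlinarith [hxnn l, sq_nonneg (x l)])
    rcases Nat.eq_zero_or_pos k with hk | hk
    · subst hk
      simp only [Finset.range_zero, Finset.sum_empty, add_zero, hxdef, Nat.zero_add]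
      exact hdata0 d
    · have hsub : (k + d) - k = d := by omega
      have hrk := hrec (k + d) k hk (Nat.le_add_right _ _)
      rw [hsub] at hrk
      have step1 : x k ≤ vecNorm2 (V d 0) +
          vecNorm2 (Δt • Sinv.mulVec
            (∑ l ∈ Finset.range k, F (l + d) l (V (l + d) l))) := by
        simp only [hxdef]
        rw [hrk]
        exact vecNorm2_add_le _ _
      have step2 : vecNorm2 (Δt • Sinv.mulVec
            (∑ l ∈ Finset.range k, F (l + d) l (V (l + d) l))) ≤
          Δt * frobNorm Sinv *
            ∑ l ∈ Finset.range k, vecNorm2 (F (l + d) l (V (l + d) l)) := by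
        rw [vecNorm2_smul, abs_of_pos hΔt]
        calc Δt * vecNorm2 (Sinv.mulVec (∑ l ∈ Finset.range k, F (l + d) l (V (l + d) l)))
            ≤ Δt * (frobNorm Sinv *
                vecNorm2 (∑ l ∈ Finset.range k, F (l + d) l (V (l + d) l))) :=
              mul_le_mul_of_nonneg_left (vecNorm2_mulVec_le _ _) (le_of_lt hΔt)
          _ ≤ Δt * (frobNorm Sinv *
                ∑ l ∈ Finset.range k, vecNorm2 (F (l + d) l (V (l + d) l))) := by
              apply mul_le_mul_of_nonneg_left _ (le_of_lt hΔt)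
              exact mul_le_mul_of_nonneg_left (vecNorm2_sum_le _ _) (frobNorm_nonneg _)
          _ = Δt * frobNorm Sinv *
                ∑ l ∈ Finset.range k, vecNorm2 (F (l + d) l (V (l + d) l)) := by ring
      have step3 : Δt * frobNorm Sinv *
            ∑ l ∈ Finset.range k, vecNorm2 (F (l + d) l (V (l + d) l)) ≤
          ∑ l ∈ Finset.range k, q l * (x l + x l ^ 2) := by
        rw [Finset.mul_sum]
        apply Finset.sum_le_sum
        intro l _
        have := hFbound (l + d) l (V (l + d) l)
        calc Δt * frobNorm Sinv * vecNorm2 (F (l + d) l (V (l + d) l))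
            ≤ Δt * frobNorm Sinv * (P (l + d) l * (x l + x l ^ 2)) :=
              mul_le_mul_of_nonneg_left this hDS
          _ = q l * (x l + x l ^ 2) := by simp only [hqdef]; ring
      have := hdata0 d
      linarith
  have hQ : ∀ k, ∑ l ∈ Finset.range k, q l ≤ Real.log ((C + 1) / (C + 1 / 2)) := by
    intro k
    have hdiag : ∑ l ∈ Finset.range k, P (l + d) l ≤
        ∑ a ∈ Finset.range (k + d + 1), ∑ b ∈ Finset.range (k + 1), P a b := by
      rw [Finset.sum_comm]
      calc ∑ l ∈ Finset.range k, P (l + d) l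
          ≤ ∑ l ∈ Finset.range (k + 1), P (l + d) l :=
            Finset.sum_le_sum_of_subset_of_nonneg
              (Finset.range_subset_range.mpr (Nat.le_succ k)) (fun l _ _ => hPnn _ _)
        _ ≤ ∑ b ∈ Finset.range (k + 1), ∑ a ∈ Finset.range (k + d + 1), P a b := by
            apply Finset.sum_le_sum
            intro b hb
            have hmem : b + d ∈ Finset.range (k + d + 1) := by
              rw [Finset.mem_range] at *; omega
            exact Finset.single_le_sum (fun a _ => hPnn a b) hmem
    calc ∑ l ∈ Finset.range k, q l
        = Δt * frobNorm Sinv * ∑ l ∈ Finset.range k, P (l + d) l := by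
          rw [Finset.mul_sum]
      _ ≤ Δt * frobNorm Sinv *
            ∑ a ∈ Finset.range (k + d + 1), ∑ b ∈ Finset.range (k + 1), P a b :=
          mul_le_mul_of_nonneg_left hdiag hDS
      _ ≤ Real.log ((C + 1) / (C + 1 / 2)) := hsmall (k + d) k
  have := gronwall_ou_iang C hC x q hxnn hqnn hX hQ j
  have hji' : j + d = i := by omega
  simpa [hxdef, hji'] using this
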